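/- arXiv:1810.00269 — 9 statements merged into one kernel-verified Lean document; each statement's English description precedes it below -/
import Mathlib

section
/- Let w : (0, +∞) → ℝ be a function that is differentiable with continuous derivative on (0, δ) for some δ > 0, such that the stability condition (i) holds at every point a ∈ (0, δ) at which w(a) ≠ 0, and such that w(a) ≥ −1 for all a > 0. Then w(t) ≥ 0 for all t ∈ (0, δ). -/
/-- If `w` is differentiable with continuous derivative on `(0, δ)`,
satisfies the stability condition on `(0, δ)` wherever `w a ≠ 0`, and `w a ≥ -1`
for all `a > 0`, then `w t ≥ 0` for all `t ∈ (0, δ)`. -/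
theorem stmt_1 (w : ℝ → ℝ) (δ : ℝ) (hδ : 0 < δ)
    (hdiff : ∀ t ∈ Set.Ioo (0 : ℝ) δ, DifferentiableAt ℝ w t)
    (hderiv_cont : ContinuousOn (deriv w) (Set.Ioo (0 : ℝ) δ))
    (hstab : ∀ a ∈ Set.Ioo (0 : ℝ) δ, w a ≠ 0 →
      w a - (1 / 3) * a * deriv w a / w a ≥ 0)
    (hbound : ∀ a > (0 : ℝ), w a ≥ -1) :
    ∀ t ∈ Set.Ioo (0 : ℝ) δ, w t ≥ 0 := by
  intro t ht
  obtain ⟨ht0, htδ⟩ := ht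
  by_contra hneg
  push_neg at hneg
  -- key differential inequality wherever w < 0
  have hkey : ∀ a ∈ Set.Ioo (0 : ℝ) δ, w a < 0 → 3 * (w a) ^ 2 / a ≤ deriv w a := by
    intro a ha hwa
    have hne : w a ≠ 0 := ne_of_lt hwa
    have hs := hstab a ha hne
    have h2 : (w a - 1 / 3 * a * deriv w a / w a) * w a ≤ 0 :=
      mul_nonpos_of_nonneg_of_nonpos hs hwa.le
    have h3 : 1 / 3 * a * deriv w a / w a * w a = 1 / 3 * a * deriv w a :=
      div_mul_cancel₀ _ hne
    rw [sub_mul, h3] at h2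
    rw [div_le_iff₀ ha.1]
    nlinarith [ha.1]
  -- Step 1: w < 0 on (0, t]
  have hneg_all : ∀ b ∈ Set.Ioc (0 : ℝ) t, w b < 0 := by
    set S : Set ℝ := {s | s ∈ Set.Ioc (0 : ℝ) t ∧ ∀ b ∈ Set.Icc s t, w b < 0} with hS
    have htS : t ∈ S := ⟨⟨ht0, le_refl t⟩, by
      intro b hb
      have : b = t := le_antisymm hb.2 hb.1
      rw [this]; exact hneg⟩
    have hSne : S.Nonempty := ⟨t, htS⟩
    have hSbdd : BddBelow S := ⟨0, fun s hs => hs.1.1.le⟩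
    set c := sInf S with hc
    have hc0 : 0 ≤ c := le_csInf hSne fun s hs => hs.1.1.le
    have hct : c ≤ t := csInf_le hSbdd htS
    have hb_neg : ∀ b, c < b → b ≤ t → w b < 0 := by
      intro b hcb hbt
      obtain ⟨s, hsS, hsb⟩ := exists_lt_of_csInf_lt hSne hcb
      exact hsS.2 b ⟨hsb.le, hbt⟩
    have hc_eq : c = 0 := by
      by_contra hc_ne
      have hcpos : 0 < c := lt_of_le_of_ne hc0 (Ne.symm hc_ne)
      have hcδ : c < δ := lt_of_le_of_lt hct htδ
      rcases lt_or_ge (w c) 0 with hwc | hwc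
      · -- continuity: w < 0 slightly below c too, contradicting inf
        have hcont : ContinuousAt w c := (hdiff c ⟨hcpos, hcδ⟩).continuousAt
        have hev : ∀ᶠ x in nhds c, w x < 0 :=
          hcont.eventually_lt continuousAt_const hwc
        obtain ⟨ε, hε, hball⟩ := Metric.eventually_nhds_iff.mp hev
        set s := max (c / 2) (c - ε / 2) with hsdef
        have hs0 : 0 < s := lt_of_lt_of_le (half_pos hcpos) (le_max_left _ _)
        have hsc : s < c := max_lt (by linarith) (by linarith)
        have hsS : s ∈ S := by
          refine ⟨⟨hs0, le_trans hsc.le hct⟩, ?_⟩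
          intro b hb
          rcases le_or_gt b c with hbc | hbc
          · apply hball
            rw [Real.dist_eq, abs_lt]
            have h1 : c - ε / 2 ≤ s := le_max_right _ _
            constructor <;> nlinarith [hb.1]
          · exact hb_neg b hbc hb.2
        have : c ≤ s := csInf_le hSbdd hsS
        linarith
      · -- w c ≥ 0 : strict monotonicity gives w c < w t < 0
        have hclt : c < t := by
          rcases eq_or_lt_of_le hct with h | h
          · exfalso; rw [h] at hwc; linarith
          · exact h
        have hmono : StrictMonoOn w (Set.Icc c t) := by
          apply strictMonoOn_of_deriv_pos (convex_Icc c t)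
          · intro x hx
            exact (hdiff x ⟨lt_of_lt_of_le hcpos hx.1,
              lt_of_le_of_lt hx.2 htδ⟩).continuousAt.continuousWithinAt
          · intro x hx
            rw [interior_Icc] at hx
            have hxδ : x ∈ Set.Ioo (0 : ℝ) δ := ⟨lt_trans hcpos hx.1, lt_trans hx.2 htδ⟩
            have hwx : w x < 0 := hb_neg x hx.1 hx.2.le
            have := hkey x hxδ hwx
            have hpos : 0 < 3 * (w x) ^ 2 / x := div_pos (by nlinarith) hxδ.1
            linarith
        have := hmono (Set.left_mem_Icc.mpr hct) (Set.right_mem_Icc.mpr hct) hclt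
        linarith
    intro b hb
    exact hb_neg b (hc_eq ▸ hb.1) hb.2
  -- Step 2: g = -1/w - 3 log is monotone on (0, t]; contradiction
  set g : ℝ → ℝ := fun a => -(w a)⁻¹ - 3 * Real.log a with hg
  have hderivg : ∀ a ∈ Set.Ioo (0 : ℝ) t,
      HasDerivAt g (deriv w a / (w a) ^ 2 - 3 * a⁻¹) a := by
    intro a ha
    have haδ : a ∈ Set.Ioo (0 : ℝ) δ := ⟨ha.1, lt_trans ha.2 htδ⟩
    have hwa : w a < 0 := hneg_all a ⟨ha.1, ha.2.le⟩
    have h1 : HasDerivAt w (deriv w a) a := (hdiff a haδ).hasDerivAt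
    have h2 := (h1.inv (ne_of_lt hwa)).neg
    have h4 := (Real.hasDerivAt_log (ne_of_gt ha.1)).const_mul 3
    have h5 := h2.sub h4
    have e : deriv w a / w a ^ 2 - 3 * a⁻¹ = -(-deriv w a / w a ^ 2) - 3 * a⁻¹ := by ring
    rw [e]; exact h5
  have hmonog : MonotoneOn g (Set.Ioc (0 : ℝ) t) := by
    apply monotoneOn_of_deriv_nonneg (convex_Ioc (0 : ℝ) t)
    · intro a ha
      have haδ : a ∈ Set.Ioo (0 : ℝ) δ := ⟨ha.1, lt_of_le_of_lt ha.2 htδ⟩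
      have hwa : w a < 0 := hneg_all a ha
      exact (((hdiff a haδ).continuousAt.inv₀ (ne_of_lt hwa)).neg.sub
        ((Real.continuousAt_log (ne_of_gt ha.1)).const_mul 3)).continuousWithinAt
    · rw [interior_Ioc]
      intro a ha
      exact (hderivg a ha).differentiableAt.differentiableWithinAt
    · rw [interior_Ioc]
      intro a ha
      rw [(hderivg a ha).deriv]
      have haδ : a ∈ Set.Ioo (0 : ℝ) δ := ⟨ha.1, lt_trans ha.2 htδ⟩
      have hwa : w a < 0 := hneg_all a ⟨ha.1, ha.2.le⟩
      have hk := hkey a haδ hwa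
      have hw2 : (0:ℝ) < (w a) ^ 2 := by nlinarith
      rw [sub_nonneg, le_div_iff₀ hw2]
      have : 3 * a⁻¹ * (w a) ^ 2 = 3 * (w a) ^ 2 / a := by ring
      rw [this]; exact hk
  -- choose s small: g s ≤ g t but g s > g t, contradiction
  set s := min (t / 2) (Real.exp ((1 - g t) / 3 - 1)) with hsdef
  have hs0 : 0 < s := lt_min (half_pos ht0) (Real.exp_pos _)
  have hst : s < t := lt_of_le_of_lt (min_le_left _ _) (by linarith)
  have hgs : g s ≤ g t := hmonog ⟨hs0, hst.le⟩ ⟨ht0, le_refl t⟩ hst.le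
  have hws : w s < 0 := hneg_all s ⟨hs0, hst.le⟩
  have hwsb : -1 ≤ w s := hbound s hs0
  have hinv : 1 ≤ -(w s)⁻¹ := by
    rw [← inv_neg]
    rw [le_inv_comm₀ (by norm_num) (by linarith)]
    linarith
  have hlog : Real.log s ≤ (1 - g t) / 3 - 1 := by
    calc Real.log s ≤ Real.log (Real.exp ((1 - g t) / 3 - 1)) :=
          Real.log_le_log hs0 (min_le_right _ _)
      _ = (1 - g t) / 3 - 1 := Real.log_exp _
  have : g t + 3 ≤ g s := by
    have : g s = -(w s)⁻¹ - 3 * Real.log s := rfl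
    rw [this]; linarith
  linarith
end

section
/- Let w : (0, +∞) → ℝ be differentiable with continuous derivative on (0, δ) for some 0 < δ < 1, suppose the set { t ∈ (0, 1) : w is not differentiable at t } is finite, the stability condition (i) holds at every point a at which w is differentiable and w(a) ≠ 0, w(a) ≥ −1 for all a > 0, and w(a) → w₀ as a → 1 for some w₀ with −1 ≤ w₀ < 0. Then w is discontinuous at some point t ∈ (0, 1). -/
open Set Filter

private lemma helper_antitone (E : Finset ℝ) :
    ∀ (f : ℝ → ℝ) (x y : ℝ), x ≤ y → ContinuousOn f (Set.Icc x y) →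
    (∀ t ∈ Set.Ioo x y, t ∉ E → DifferentiableAt ℝ f t ∧ deriv f t ≤ 0) →
    f y ≤ f x := by
  classical
  induction E using Finset.induction_on with
  | empty =>
    intro f x y hxy hcont hd
    have hD : Convex ℝ (Set.Icc x y) := convex_Icc x y
    have h := antitoneOn_of_deriv_nonpos hD hcont
      (fun t ht => ((hd t (by rwa [interior_Icc] at ht) (Finset.notMem_empty t)).1).differentiableWithinAt)
      (fun t ht => (hd t (by rwa [interior_Icc] at ht) (Finset.notMem_empty t)).2)
    exact h (Set.left_mem_Icc.2 hxy) (Set.right_mem_Icc.2 hxy) hxy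
  | @insert a E ha ih =>
    intro f x y hxy hcont hd
    by_cases hax : a ∈ Set.Ioo x y
    · have h1 : f a ≤ f x := by
        refine ih f x a hax.1.le (hcont.mono (Set.Icc_subset_Icc_right hax.2.le)) ?_
        intro t ht htE
        refine hd t ⟨ht.1, ht.2.trans hax.2⟩ ?_
        simp only [Finset.mem_insert, not_or]
        exact ⟨ne_of_lt ht.2, htE⟩
      have h2 : f y ≤ f a := by
        refine ih f a y hax.2.le (hcont.mono (Set.Icc_subset_Icc_left hax.1.le)) ?_
        intro t ht htE
        refine hd t ⟨hax.1.trans ht.1, ht.2⟩ ?_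
        simp only [Finset.mem_insert, not_or]
        exact ⟨(ne_of_gt ht.1), htE⟩
      exact h2.trans h1
    · refine ih f x y hxy hcont ?_
      intro t ht htE
      refine hd t ht ?_
      simp only [Finset.mem_insert, not_or]
      exact ⟨fun h => hax (h ▸ ht), htE⟩

/-- If `w` is differentiable with continuous derivative on `(0, δ)` for
some `0 < δ < 1`, the set of non-differentiability points in `(0,1)` is finite,
the stability condition holds at every point `a > 0` where `w` is differentiable
and `w a ≠ 0`, `w a ≥ -1` for all `a > 0`, and `w a → w₀` as `a → 1` with
`-1 ≤ w₀ < 0`, then `w` is discontinuous at some point of `(0, 1)`. -/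
theorem stmt_2 (w : ℝ → ℝ) (δ : ℝ) (hδ0 : 0 < δ) (hδ1 : δ < 1)
    (hdiff : ∀ t ∈ Set.Ioo (0 : ℝ) δ, DifferentiableAt ℝ w t)
    (hderiv_cont : ContinuousOn (deriv w) (Set.Ioo (0 : ℝ) δ))
    (hfin : {t ∈ Set.Ioo (0 : ℝ) 1 | ¬ DifferentiableAt ℝ w t}.Finite)
    (hstab : ∀ a > (0 : ℝ), DifferentiableAt ℝ w a → w a ≠ 0 →
      w a - (1 / 3) * a * deriv w a / w a ≥ 0)
    (hbound : ∀ a > (0 : ℝ), w a ≥ -1)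
    (w₀ : ℝ) (hw₀l : -1 ≤ w₀) (hw₀u : w₀ < 0)
    (hlim : Filter.Tendsto w (nhdsWithin 1 {(1 : ℝ)}ᶜ) (nhds w₀)) :
    ∃ t ∈ Set.Ioo (0 : ℝ) 1, ¬ ContinuousAt w t := by
  by_contra hcon
  push_neg at hcon
  have hcont : ∀ t ∈ Set.Ioo (0:ℝ) 1, ContinuousAt w t := hcon
  set E : Finset ℝ := hfin.toFinset with hE
  set g : ℝ → ℝ := fun t => (w t)⁻¹ + 3 * Real.log t with hg
  -- w tends to w₀ from the left at 1
  have hw1 : Filter.Tendsto w (nhdsWithin 1 (Set.Iio 1)) (nhds w₀) :=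
    hlim.mono_left (nhdsWithin_mono 1 (fun x hx => ne_of_lt hx))
  -- key inequality
  have key : ∀ a, 0 < a → a < 1 → (∀ t, a ≤ t → t < 1 → w t < 0) →
      w₀⁻¹ ≤ (w a)⁻¹ + 3 * Real.log a := by
    intro a ha0 ha1 hneg
    have mono : ∀ y, a < y → y < 1 → g y ≤ g a := by
      intro y hay hy1
      refine helper_antitone E g a y hay.le ?_ ?_
      · intro t ht
        have ht0 : 0 < t := lt_of_lt_of_le ha0 ht.1
        have ht1 : t < 1 := lt_of_le_of_lt ht.2 hy1
        have hwt : w t ≠ 0 := ne_of_lt (hneg t ht.1 ht1)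
        exact (((hcont t ⟨ht0, ht1⟩).inv₀ hwt).add
          ((Real.continuousAt_log ht0.ne').const_mul 3)).continuousWithinAt
      · intro t ht htE
        have ht0 : 0 < t := lt_trans ha0 ht.1
        have ht1 : t < 1 := lt_trans ht.2 hy1
        have hdw : DifferentiableAt ℝ w t := by
          by_contra hnd
          exact htE (hfin.mem_toFinset.mpr ⟨⟨ht0, ht1⟩, hnd⟩)
        have hwt : w t < 0 := hneg t ht.1.le ht1
        have hne : w t ≠ 0 := ne_of_lt hwt
        have hd : HasDerivAt g (-(deriv w t) / (w t) ^ 2 + 3 * t⁻¹) t :=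
          ((hdw.hasDerivAt.inv hne)).add ((Real.hasDerivAt_log ht0.ne').const_mul 3)
        refine ⟨hd.differentiableAt, ?_⟩
        rw [hd.deriv]
        have hs := hstab t ht0 hdw hne
        set u := w t with hu
        set d := deriv w t with hdd
        have hu2 : (0:ℝ) < u ^ 2 := by positivity
        have hnum : u * u - 1/3 * t * d ≤ 0 := by
          by_contra hpos
          push_neg at hpos
          have hdiv : (0:ℝ) > (u * u - 1/3 * t * d) / u := div_neg_of_pos_of_neg hpos hwt
          have heq2 : (u * u - 1/3 * t * d) / u = u - 1/3 * t * d / u := by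
            field_simp
          rw [heq2] at hdiv
          linarith [hs]
        have key2 : 3 * u ^ 2 ≤ d * t := by nlinarith [hnum]
        have heq : -d / u ^ 2 + 3 * t⁻¹ = (3 * u ^ 2 - d * t) / (u ^ 2 * t) := by
          field_simp
          ring
        rw [heq]
        apply div_nonpos_of_nonpos_of_nonneg
        · linarith
        · positivity
    -- limit
    have hgl : Filter.Tendsto g (nhdsWithin 1 (Set.Iio 1)) (nhds (w₀⁻¹)) := by
      have h1 : Filter.Tendsto (fun t => (w t)⁻¹) (nhdsWithin 1 (Set.Iio 1)) (nhds (w₀⁻¹)) :=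
        hw1.inv₀ (ne_of_lt hw₀u)
      have h2 : Filter.Tendsto (fun t => 3 * Real.log t) (nhdsWithin 1 (Set.Iio 1)) (nhds 0) := by
        have := ((Real.continuousAt_log (one_ne_zero)).const_mul (3:ℝ))
        simp only [ContinuousAt, Real.log_one, mul_zero] at this
        exact this.mono_left nhdsWithin_le_nhds
      have := h1.add h2
      simpa using this
    have hev : ∀ᶠ t in nhdsWithin 1 (Set.Iio 1), g t ≤ g a := by
      filter_upwards [Ioo_mem_nhdsLT_of_mem (⟨ha1, le_refl (1:ℝ)⟩ : (1:ℝ) ∈ Set.Ioc a 1)]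
        with t ht
      exact mono t ht.1 ht.2
    exact le_of_tendsto hgl hev
  -- find r with w < 0 on (r,1)
  have hev0 : ∀ᶠ t in nhdsWithin 1 (Set.Iio 1), w t < 0 := hw1.eventually_lt_const hw₀u
  rw [Filter.eventually_iff, mem_nhdsLT_iff_exists_Ioo_subset] at hev0
  obtain ⟨r, hr1, hsub⟩ := hev0
  -- the special point p
  have h1w : 1 / w₀ ≤ -1 := by
    rw [div_le_iff_of_neg hw₀u]
    linarith
  set p : ℝ := Real.exp ((1 + 2 / w₀) / 6) with hp
  have hp0 : 0 < p := Real.exp_pos _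
  have hp1 : p < 1 := by
    rw [hp, Real.exp_lt_one_iff]
    have : 2 / w₀ ≤ -2 := by
      have : 2 / w₀ = 2 * (1 / w₀) := by ring
      rw [this]; linarith
    linarith
  have hlogp : Real.log p = (1 + 2 / w₀) / 6 := Real.log_exp _
  set r₂ : ℝ := max r p with hr₂
  have hr₂1 : r₂ < 1 := max_lt hr1 hp1
  have hr₂p : p ≤ r₂ := le_max_right _ _
  have hnegr : ∀ t, r₂ < t → t < 1 → w t < 0 := fun t h1 h2 =>
    hsub ⟨lt_of_le_of_lt (le_max_left r p) h1, h2⟩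
  -- contradiction from key at a point where w < 0 on [a,1), a with specific value
  have contra1 : ∀ a, 0 < a → a < 1 → Real.log a ≤ Real.log p →
      (∀ t, a ≤ t → t < 1 → w t < 0) → False := by
    intro a ha0 ha1 hla hneg
    have hk := key a ha0 ha1 hneg
    have hwa : w a < 0 := hneg a le_rfl ha1
    have hba : w a ≥ -1 := hbound a ha0
    have h2d : 2 / w₀ = 2 * w₀⁻¹ := by ring
    have h1d : 1 / w₀ = w₀⁻¹ := one_div w₀
    have hua : -(1/2 : ℝ) ≤ (w a)⁻¹ := by
      have h3 : 3 * Real.log a ≤ 3 * Real.log p := by linarith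
      rw [hlogp] at h3
      rw [h2d] at h3
      linarith
    have hprod : w a * (w a)⁻¹ = 1 := mul_inv_cancel₀ (ne_of_lt hwa)
    nlinarith [mul_nonneg (neg_nonneg.mpr hwa.le) (by linarith : (0:ℝ) ≤ (w a)⁻¹ + 1/2)]
  -- the compact set K
  have hcontK : ContinuousOn w (Set.Icc p r₂) := fun t ht =>
    (hcont t ⟨lt_of_lt_of_le hp0 ht.1, lt_of_le_of_lt ht.2 hr₂1⟩).continuousWithinAt
  set K : Set ℝ := Set.Icc p r₂ ∩ w ⁻¹' Set.Ici 0 with hK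
  have hKclosed : IsClosed K := hcontK.preimage_isClosed_of_isClosed isClosed_Icc isClosed_Ici
  have hKcomp : IsCompact K := isCompact_Icc.of_isClosed_subset hKclosed Set.inter_subset_left
  rcases K.eq_empty_or_nonempty with hKe | hKne
  · -- w < 0 on [p, 1)
    refine contra1 p hp0 hp1 le_rfl ?_
    intro t h1 h2
    rcases le_or_gt t r₂ with h3 | h3
    · by_contra hge
      push_neg at hge
      exact (Set.eq_empty_iff_forall_notMem.1 hKe t) ⟨⟨h1, h3⟩, hge⟩
    · exact hnegr t h3 h2
  · set b : ℝ := sSup K with hb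
    have hbK : b ∈ K := hKcomp.sSup_mem hKne
    have hb0 : 0 < b := lt_of_lt_of_le hp0 hbK.1.1
    have hb1 : b < 1 := lt_of_le_of_lt hbK.1.2 hr₂1
    have hwb : 0 ≤ w b := hbK.2
    have hnegb : ∀ t, b < t → t < 1 → w t < 0 := by
      intro t h1 h2
      rcases le_or_gt t r₂ with h3 | h3
      · by_contra hge
        push_neg at hge
        have : t ∈ K := ⟨⟨hbK.1.1.trans h1.le, h3⟩, hge⟩
        exact absurd (le_csSup hKcomp.bddAbove this) (not_le.mpr h1)
      · exact hnegr t h3 h2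
    -- for a ∈ (b,1), w a ≤ w₀
    have hle : ∀ a, b < a → a < 1 → w a ≤ w₀ := by
      intro a h1 h2
      have ha0 : 0 < a := hb0.trans h1
      have hk := key a ha0 h2 (fun t ht1 ht2 => hnegb t (lt_of_lt_of_le h1 ht1) ht2)
      have hwa : w a < 0 := hnegb a h1 h2
      have hla : Real.log a ≤ 0 := Real.log_nonpos ha0.le h2.le
      have h3 : w₀⁻¹ ≤ (w a)⁻¹ := by linarith
      nlinarith [mul_inv_cancel₀ (ne_of_lt hwa), mul_inv_cancel₀ (ne_of_lt hw₀u),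
        mul_pos (neg_pos.2 hwa) (neg_pos.2 hw₀u)]
    have htend : Filter.Tendsto w (nhdsWithin b (Set.Ioi b)) (nhds (w b)) :=
      ((hcont b ⟨hb0, hb1⟩).tendsto).mono_left nhdsWithin_le_nhds
    have hev : ∀ᶠ t in nhdsWithin b (Set.Ioi b), w t ≤ w₀ := by
      filter_upwards [Ioo_mem_nhdsGT_of_mem (⟨le_refl b, hb1⟩ : b ∈ Set.Ico b 1)] with t ht
      exact hle t ht.1 ht.2
    have : w b ≤ w₀ := le_of_tendsto htend hev
    linarith
end

section
/- There is no function w : (0, +∞) → ℝ that is differentiable on all of (0, +∞), has continuous derivative on (0, δ) for some δ > 0, and satisfies: the stability condition (i) at every point a with w(a) ≠ 0; w(a) ≥ −1 for all a > 0; and w(a) → w₀ as a → 1 for some w₀ with −1 ≤ w₀ < 0. -/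
open Real Set Filter Topology

/-- There is no function `w` differentiable on all of `(0, +∞)`, with
continuous derivative on `(0, δ)` for some `δ > 0`, satisfying the stability
condition at every `a > 0` with `w a ≠ 0`, with `w a ≥ -1` for all `a > 0`, and
with `w a → w₀` as `a → 1` for some `-1 ≤ w₀ < 0`. -/
theorem stmt_3 :
    ¬ ∃ (w : ℝ → ℝ) (δ w₀ : ℝ),
      0 < δ ∧
      (∀ a ∈ Set.Ioi (0 : ℝ), DifferentiableAt ℝ w a) ∧
      ContinuousOn (deriv w) (Set.Ioo (0 : ℝ) δ) ∧
      (∀ a > (0 : ℝ), w a ≠ 0 → w a - (1 / 3) * a * deriv w a / w a ≥ 0) ∧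
      (∀ a > (0 : ℝ), w a ≥ -1) ∧
      -1 ≤ w₀ ∧ w₀ < 0 ∧
      Filter.Tendsto w (nhdsWithin 1 {(1 : ℝ)}ᶜ) (nhds w₀) := by
  rintro ⟨w, δ, w₀, hδ, hdiff, hcontd, hstab, hlb, hw0l, hw0u, hlim⟩
  have hwc : ∀ a : ℝ, 0 < a → ContinuousAt w a := fun a ha =>
    (hdiff a (Set.mem_Ioi.mpr ha)).continuousAt
  -- w 1 = w₀
  have w1 : w 1 = w₀ := by
    have h1 : Tendsto w (𝓝[≠] (1:ℝ)) (𝓝 (w 1)) :=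
      ((hwc 1 one_pos).continuousWithinAt)
    exact tendsto_nhds_unique h1 hlim
  have hw0ne : w₀ ≠ 0 := ne_of_lt hw0u
  -- derivative lower bound where w < 0
  have hderiv : ∀ a : ℝ, 0 < a → w a < 0 → 3 * (w a)^2 ≤ a * deriv w a := by
    intro a ha hwa
    have hne : w a ≠ 0 := ne_of_lt hwa
    have h := hstab a ha hne
    have h2 : (1/3) * a * deriv w a / w a ≤ w a := by linarith
    have h3 := mul_le_mul_of_nonpos_left h2 (le_of_lt hwa)
    have h4 : w a * ((1/3) * a * deriv w a / w a) = (1/3) * a * deriv w a := by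
      field_simp
    rw [h4] at h3
    nlinarith [h3]
  set g : ℝ → ℝ := fun x => -(w x)⁻¹ - 3 * Real.log x with hg
  have gderiv : ∀ x : ℝ, 0 < x → w x < 0 →
      HasDerivAt g (deriv w x / (w x)^2 - 3 * x⁻¹) x := by
    intro x hx hwx
    have hne : w x ≠ 0 := ne_of_lt hwx
    have h1 : HasDerivAt (fun y => (w y)⁻¹) (-(deriv w x) / (w x)^2) x :=
      ((hdiff x (Set.mem_Ioi.mpr hx)).hasDerivAt).inv hne
    have h2 : HasDerivAt (fun y => -(w y)⁻¹) (deriv w x / (w x)^2) x := by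
      have := h1.neg
      simp only [neg_div, neg_neg] at this
      exact this
    have h3 : HasDerivAt (fun y => 3 * Real.log y) (3 * x⁻¹) x :=
      (Real.hasDerivAt_log (ne_of_gt hx)).const_mul 3
    exact h2.sub h3
  -- monotonicity conclusion
  have key : ∀ a : ℝ, 0 < a → a ≤ 1 → (∀ x ∈ Icc a 1, w x < 0) → g a ≤ g 1 := by
    intro a ha ha1 hneg
    rcases eq_or_lt_of_le ha1 with rfl | hlt
    · exact le_refl _
    have hmono : MonotoneOn g (Icc a 1) := by
      apply monotoneOn_of_deriv_nonneg (convex_Icc a 1)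
      · intro x hx
        have hx0 : 0 < x := lt_of_lt_of_le ha hx.1
        exact ((gderiv x hx0 (hneg x hx)).differentiableAt.continuousAt).continuousWithinAt
      · rw [interior_Icc]
        intro x hx
        have hx0 : 0 < x := lt_trans ha hx.1
        exact (gderiv x hx0 (hneg x (Ioo_subset_Icc_self hx))).differentiableAt.differentiableWithinAt
      · rw [interior_Icc]
        intro x hx
        have hx0 : 0 < x := lt_trans ha hx.1
        have hwx := hneg x (Ioo_subset_Icc_self hx)
        have hd := gderiv x hx0 hwx
        rw [hd.deriv]
        have hb := hderiv x hx0 hwx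
        have hW2 : 0 < (w x)^2 := (sq_nonneg (w x)).lt_of_ne (Ne.symm (pow_ne_zero 2 (ne_of_lt hwx)))
        rw [sub_nonneg, ← div_eq_mul_inv, div_le_div_iff₀ hx0 hW2]
        nlinarith [hb]
    exact hmono ⟨le_refl a, ha1⟩ ⟨ha1, le_refl 1⟩ ha1
  have g1 : g 1 = -w₀⁻¹ := by simp [hg, w1]
  set ε : ℝ := Real.exp ((1 + w₀⁻¹)/3) with hε
  have fact2 : ∀ a : ℝ, 0 < a → a ≤ 1 → (∀ x ∈ Icc a 1, w x < 0) →
      w a ≤ w₀ ∧ ε ≤ a := by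
    intro a ha ha1 hneg
    have hga := key a ha ha1 hneg
    rw [g1] at hga
    have hga' : -(w a)⁻¹ - 3 * Real.log a ≤ -w₀⁻¹ := hga
    have hwa : w a < 0 := hneg a ⟨le_refl a, ha1⟩
    have hwane : w a ≠ 0 := ne_of_lt hwa
    have hlog : Real.log a ≤ 0 := Real.log_nonpos (le_of_lt ha) ha1
    have hinva : (w a)⁻¹ < 0 := inv_lt_zero.mpr hwa
    have hinv0 : w₀⁻¹ < 0 := inv_lt_zero.mpr hw0u
    have e1 : w a * (w a)⁻¹ = 1 := mul_inv_cancel₀ hwane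
    have e2 : w₀ * w₀⁻¹ = 1 := mul_inv_cancel₀ hw0ne
    have h5 : (w a)⁻¹ ≤ -1 := by
      have hge := hlb a ha
      nlinarith [mul_nonneg (by linarith : (0:ℝ) ≤ w a + 1) (by linarith : (0:ℝ) ≤ -(w a)⁻¹)]
    constructor
    · -- w a ≤ w₀
      have h4 : w₀⁻¹ ≤ (w a)⁻¹ := by linarith
      have hpos : 0 < w a * w₀ := mul_pos_of_neg_of_neg hwa hw0u
      nlinarith [mul_le_mul_of_nonneg_left h4 (le_of_lt hpos)]
    · have h6 : (1 + w₀⁻¹)/3 ≤ Real.log a := by linarith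
      calc ε = Real.exp ((1+w₀⁻¹)/3) := rfl
        _ ≤ Real.exp (Real.log a) := Real.exp_le_exp.mpr h6
        _ = a := Real.exp_log ha
  -- the set T and its infimum
  set T : Set ℝ := {a : ℝ | a ∈ Ioc (0:ℝ) 1 ∧ ∀ x ∈ Icc a 1, w x < 0} with hT
  have hTne : T.Nonempty := by
    have hev : ∀ᶠ x in 𝓝 (1:ℝ), w x < 0 := by
      have h0 : w ⁻¹' (Iio 0) ∈ 𝓝 (1:ℝ) :=
        (hwc 1 one_pos).preimage_mem_nhds (Iio_mem_nhds (by rw [w1]; exact hw0u))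
      exact eventually_of_mem h0 (fun x hx => hx)
    rcases Metric.eventually_nhds_iff.mp hev with ⟨r, hr, hball⟩
    refine ⟨max (1 - r/2) (1/2), ⟨?_, ?_⟩, ?_⟩
    · exact lt_of_lt_of_le (by norm_num) (le_max_right _ _)
    · exact max_le (by linarith) (by norm_num)
    · intro x hx
      apply hball
      have h1 : 1 - r/2 ≤ x := le_trans (le_max_left _ _) hx.1
      rw [Real.dist_eq, abs_of_nonpos (by linarith [hx.2])]
      linarith [hx.2]
  have hbdd : BddBelow T := ⟨0, fun t ht => le_of_lt ht.1.1⟩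
  set c : ℝ := sInf T with hc
  obtain ⟨t0, ht0⟩ := hTne
  have hc1 : c ≤ 1 := le_trans (csInf_le hbdd ht0) ht0.1.2
  -- all points of (c,1] are negative
  have hneg1 : ∀ a : ℝ, c < a → a ≤ 1 → w a < 0 := by
    intro a hca ha1
    have hex : ∃ t ∈ T, t < a := by
      by_contra h
      push_neg at h
      have : a ≤ sInf T := le_csInf ⟨t0, ht0⟩ (fun t ht => h t ht)
      rw [← hc] at this
      linarith
    obtain ⟨t, htT, hta⟩ := hex
    exact htT.2 a ⟨le_of_lt hta, ha1⟩
  have hεpos : 0 < ε := Real.exp_pos _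
  have hεc : ε ≤ c := le_csInf ⟨t0, ht0⟩ (fun t ht => (fact2 t ht.1.1 ht.1.2 ht.2).2)
  have hc0 : 0 < c := lt_of_lt_of_le hεpos hεc
  have hwle : ∀ a : ℝ, c < a → a ≤ 1 → w a ≤ w₀ := by
    intro a hca ha1
    have ha0 : 0 < a := lt_trans hc0 hca
    refine (fact2 a ha0 ha1 ?_).1
    intro x hx
    exact hneg1 x (lt_of_lt_of_le hca hx.1) hx.2
  -- w c < 0
  have hwcneg : w c < 0 := by
    rcases eq_or_lt_of_le hc1 with hceq | hclt
    · rw [hceq, w1]; exact hw0u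
    · have htend : Tendsto w (𝓝[>] c) (𝓝 (w c)) :=
        ((hwc c hc0).continuousWithinAt)
      have hev : ∀ᶠ x in 𝓝[>] c, w x ≤ w₀ := by
        filter_upwards [Ioo_mem_nhdsGT_of_mem ⟨le_refl c, hclt⟩] with x hx
        exact hwle x hx.1 (le_of_lt hx.2)
      have : w c ≤ w₀ := le_of_tendsto htend hev
      linarith
  -- extend negativity to the left of c, contradiction with sInf
  have hmem : w ⁻¹' (Iio 0) ∈ 𝓝 c := (hwc c hc0).preimage_mem_nhds (Iio_mem_nhds hwcneg)
  rcases Metric.mem_nhds_iff.mp hmem with ⟨r, hr, hball⟩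
  set t : ℝ := c - min (r/2) (c/2) with ht
  have hminr : min (r/2) (c/2) ≤ r/2 := min_le_left _ _
  have hminc : min (r/2) (c/2) ≤ c/2 := min_le_right _ _
  have hmin : 0 < min (r/2) (c/2) := lt_min (by linarith) (by linarith)
  have ht0' : 0 < t := by rw [ht]; linarith
  have htc : t < c := by rw [ht]; linarith
  have ht1 : t ≤ 1 := le_trans (le_of_lt htc) hc1
  have htT : t ∈ T := by
    refine ⟨⟨ht0', ht1⟩, ?_⟩
    intro x hx
    rcases le_or_gt x c with hxc | hxc
    · apply hball
      rw [Metric.mem_ball, Real.dist_eq, abs_of_nonpos (by linarith [hx.1])]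
      have := hx.1
      rw [ht] at this
      linarith
    · exact hneg1 x hxc hx.2
  have : c ≤ t := csInf_le hbdd htT
  linarith
end

section
/- Let −1 < w₀ < 0 and d = (w₀ + 1)/(3 w₀). Define w : (0, +∞) → ℝ by w(a) = −a/(2 e^d) + 1 for a ∈ (0, e^d] and w(a) = −1/(3 ln a − 1/w₀) for a ∈ (e^d, +∞). Then: (1) the stability condition (i) holds at every point a ≠ e^d at which w(a) ≠ 0 (w is differentiable at all such points); (2) w(a) → w₀ as a → 1; and (3) −1 ≤ w(a) ≤ 1 for all a > 0. -/
/-- For `-1 < w₀ < 0` and `d = (w₀+1)/(3w₀)`, the function `w` equal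
to `-a/(2 e^d) + 1` on `(0, e^d]` and to `-1/(3 ln a - 1/w₀)` on `(e^d, +∞)`
satisfies: (1) `w` is differentiable at every `a > 0` with `a ≠ e^d`, and the
stability condition holds at every such point where `w a ≠ 0`; (2) `w a → w₀`
as `a → 1`; (3) `-1 ≤ w a ≤ 1` for all `a > 0`. -/
theorem stmt_5 (w₀ : ℝ) (hw₀l : -1 < w₀) (hw₀u : w₀ < 0)
    (d : ℝ) (hd : d = (w₀ + 1) / (3 * w₀))
    (w : ℝ → ℝ)
    (hw : w = fun a => if a ≤ Real.exp d then -a / (2 * Real.exp d) + 1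
      else -1 / (3 * Real.log a - 1 / w₀)) :
    (∀ a ∈ Set.Ioi (0 : ℝ), a ≠ Real.exp d → DifferentiableAt ℝ w a) ∧
    (∀ a ∈ Set.Ioi (0 : ℝ), a ≠ Real.exp d → w a ≠ 0 →
        w a - (1 / 3) * a * deriv w a / w a ≥ 0) ∧
    Filter.Tendsto w (nhdsWithin 1 {(1 : ℝ)}ᶜ) (nhds w₀) ∧
    (∀ a > (0 : ℝ), -1 ≤ w a ∧ w a ≤ 1) := by
  have hw0ne : w₀ ≠ 0 := ne_of_lt hw₀u
  set E := Real.exp d with hE_def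
  have hE : 0 < E := Real.exp_pos d
  have hdneg : d < 0 := by
    rw [hd]
    apply div_neg_of_pos_of_neg <;> linarith
  have hE1 : E < 1 := by
    have := Real.exp_lt_one_iff.mpr hdneg
    simpa [hE_def] using this
  have h3d : 3 * d - 1 / w₀ = 1 := by
    rw [hd]; field_simp; ring
  have hden : ∀ a : ℝ, E < a → 1 < 3 * Real.log a - 1 / w₀ := by
    intro a ha
    have h0a : 0 < a := lt_trans hE ha
    have : d < Real.log a := (Real.lt_log_iff_exp_lt h0a).mpr ha
    linarith
  -- eventual equalities
  have heq1 : ∀ a : ℝ, a < E → w =ᶠ[nhds a] fun x => -x / (2 * E) + 1 := by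
    intro a ha
    filter_upwards [Iio_mem_nhds ha] with x hx
    have hx' : x < E := hx
    rw [hw]
    simp only [if_pos (le_of_lt hx')]
  have heq2 : ∀ a : ℝ, E < a →
      w =ᶠ[nhds a] fun x => -1 / (3 * Real.log x - 1 / w₀) := by
    intro a ha
    filter_upwards [Ioi_mem_nhds ha] with x hx
    have hx' : E < x := hx
    rw [hw]
    simp only [if_neg (not_le.mpr hx')]
  -- derivatives
  have hder1 : ∀ a : ℝ, a < E → HasDerivAt w (-1 / (2 * E)) a := by
    intro a ha
    have h : HasDerivAt (fun x : ℝ => -x / (2 * E) + 1) (-1 / (2 * E)) a :=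
      (((hasDerivAt_id a).neg).div_const (2 * E)).add_const 1
    exact h.congr_of_eventuallyEq (heq1 a ha)
  have hder2 : ∀ a : ℝ, E < a →
      HasDerivAt w ((3 * a⁻¹) / (3 * Real.log a - 1 / w₀) ^ 2) a := by
    intro a ha
    have h0a : 0 < a := lt_trans hE ha
    have ht : 1 < 3 * Real.log a - 1 / w₀ := hden a ha
    have htne : 3 * Real.log a - 1 / w₀ ≠ 0 := by linarith
    have hD : HasDerivAt (fun x : ℝ => 3 * Real.log x - 1 / w₀) (3 * a⁻¹) a :=
      ((Real.hasDerivAt_log (ne_of_gt h0a)).const_mul 3).sub_const (1 / w₀)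
    have h : HasDerivAt (fun x : ℝ => -(3 * Real.log x - 1 / w₀)⁻¹)
        (3 * a⁻¹ / (3 * Real.log a - 1 / w₀) ^ 2) a := by
      have := (hD.inv htne).neg
      exact this.congr_deriv (by ring)
    have h' : HasDerivAt (fun x : ℝ => -1 / (3 * Real.log x - 1 / w₀))
        (3 * a⁻¹ / (3 * Real.log a - 1 / w₀) ^ 2) a := by
      simpa only [neg_div, one_div] using h
    exact h'.congr_of_eventuallyEq (heq2 a ha)
  refine ⟨?_, ?_, ?_, ?_⟩
  · -- differentiability
    intro a _ hane
    rcases lt_or_gt_of_ne hane with h | h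
    · exact (hder1 a h).differentiableAt
    · exact (hder2 a h).differentiableAt
  · -- stability
    intro a ha hane hwne
    have h0a : (0 : ℝ) < a := ha
    rcases lt_or_gt_of_ne hane with h | h
    · -- first branch
      have hderiv : deriv w a = -1 / (2 * E) := (hder1 a h).deriv
      have hwa : w a = -a / (2 * E) + 1 := by
        rw [hw]; simp only [if_pos (le_of_lt h)]
      have hfrac : a / (2 * E) < 1 := (div_lt_one (by linarith)).mpr (by linarith)
      have hwpos : 0 < w a := by
        rw [hwa, neg_div]; linarith
      rw [hderiv]
      have key : w a - 1 / 3 * a * (-1 / (2 * E)) / w a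
          = w a + (a / (6 * E)) / w a := by ring
      rw [key]
      have h1 : 0 ≤ (a / (6 * E)) / w a :=
        div_nonneg (div_nonneg h0a.le (by linarith)) hwpos.le
      linarith
    · -- second branch
      have ht : 1 < 3 * Real.log a - 1 / w₀ := hden a h
      have htne : 3 * Real.log a - 1 / w₀ ≠ 0 := by linarith
      have hane0 : a ≠ 0 := ne_of_gt h0a
      have hderiv : deriv w a = (3 * a⁻¹) / (3 * Real.log a - 1 / w₀) ^ 2 :=
        (hder2 a h).deriv
      have hwa : w a = -1 / (3 * Real.log a - 1 / w₀) := by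
        rw [hw]; simp only [if_neg (not_le.mpr h)]
      rw [hderiv, hwa]
      generalize hT : 3 * Real.log a - 1 / w₀ = t at ht htne ⊢
      have : -1 / t - 1 / 3 * a * (3 * a⁻¹ / t ^ 2) / (-1 / t) = 0 := by
        field_simp
        ring
      linarith
  · -- tendsto at 1
    have hc : ContinuousAt w 1 := (hder2 1 hE1).differentiableAt.continuousAt
    have hw1 : w 1 = w₀ := by
      rw [hw]
      simp only [if_neg (not_le.mpr hE1), Real.log_one]
      field_simp
      ring
    have := hc.tendsto
    rw [hw1] at this
    exact this.mono_left nhdsWithin_le_nhds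
  · -- bounds
    intro a ha
    rcases le_or_gt a E with h | h
    · have hwa : w a = -a / (2 * E) + 1 := by
        rw [hw]; simp only [if_pos h]
      have hfrac1 : a / (2 * E) ≤ 1 := by
        rw [div_le_one (by linarith)]; linarith
      have hfrac0 : 0 < a / (2 * E) := div_pos ha (by linarith)
      rw [hwa, neg_div]
      constructor <;> linarith
    · have ht : 1 < 3 * Real.log a - 1 / w₀ := hden a h
      have hwa : w a = -1 / (3 * Real.log a - 1 / w₀) := by
        rw [hw]; simp only [if_neg (not_le.mpr h)]
      have h1 : 1 / (3 * Real.log a - 1 / w₀) ≤ 1 := by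
        rw [div_le_one (by linarith)]; linarith
      have h0 : 0 < 1 / (3 * Real.log a - 1 / w₀) := by positivity
      rw [hwa, neg_div]
      constructor <;> linarith
end

section
/- There is no function w : (0, +∞) → ℝ with the following properties: there exists an open interval J containing 1 such that w is differentiable at every point of J ∖ {1}; the stability condition (i) holds at every point a at which w is differentiable and w(a) ≠ 0; w(a) → −1 as a → 1; and −1 ≤ w(a) ≤ 1 for all a > 0. -/
open Filter Set

/-- There is no function `w : (0, +∞) → ℝ` such that: there exists an
open interval `J ⊆ (0, +∞)` containing `1` with `w` differentiable at every point
of `J \ {1}`; the stability condition holds at every `a > 0` where `w` is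
differentiable and `w a ≠ 0`; `w a → -1` as `a → 1`; and `-1 ≤ w a ≤ 1` for all
`a > 0`. -/
theorem stmt_7 :
    ¬ ∃ (w : ℝ → ℝ) (l u : ℝ),
      0 ≤ l ∧ l < 1 ∧ 1 < u ∧
      (∀ a ∈ Set.Ioo l u, a ≠ 1 → DifferentiableAt ℝ w a) ∧
      (∀ a > (0 : ℝ), DifferentiableAt ℝ w a → w a ≠ 0 →
        w a - (1 / 3) * a * deriv w a / w a ≥ 0) ∧
      Filter.Tendsto w (nhdsWithin 1 {(1 : ℝ)}ᶜ) (nhds (-1)) ∧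
      (∀ a > (0 : ℝ), -1 ≤ w a ∧ w a ≤ 1) := by
  rintro ⟨w, l, u, hl0, hl1, hu1, hdiff, hstab, htend, hbound⟩
  -- get ε > 0 such that w a < -1/2 for a with |a - 1| < ε, a ≠ 1
  have hev : ∀ᶠ a in nhdsWithin 1 {(1:ℝ)}ᶜ, w a < -1/2 := by
    have : ∀ᶠ x in nhds (-1 : ℝ), x < -1/2 := eventually_lt_nhds (by norm_num)
    exact htend.eventually this
  rw [Filter.Eventually, Metric.mem_nhdsWithin_iff] at hev
  obtain ⟨ε, hε, hball⟩ := hev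
  -- choose a₀ with max l (1-ε) < a₀ < 1
  set m : ℝ := max l (1 - ε) with hm
  have hm1 : m < 1 := by
    apply max_lt hl1; linarith
  set a₀ : ℝ := (m + 1) / 2 with ha₀def
  have hma₀ : m < a₀ := by simp only [ha₀def]; linarith
  have ha₀1 : a₀ < 1 := by simp only [ha₀def]; linarith
  have hla₀ : l < a₀ := lt_of_le_of_lt (le_max_left _ _) hma₀
  have ha₀pos : 0 < a₀ := lt_of_le_of_lt hl0 hla₀
  -- all points of [a₀, 1) satisfy: in Ioo l u, ≠ 1, w < -1/2, differentiable, deriv ≥ 3/4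
  have hkey : ∀ a, a₀ ≤ a → a < 1 → DifferentiableAt ℝ w a ∧ (3/4 : ℝ) ≤ deriv w a := by
    intro a haa hal
    have hIoo : a ∈ Set.Ioo l u := ⟨lt_of_lt_of_le hla₀ haa, lt_trans hal hu1⟩
    have hane : a ≠ 1 := ne_of_lt hal
    have hd := hdiff a hIoo hane
    refine ⟨hd, ?_⟩
    have hwa : w a < -1/2 := by
      apply hball
      refine ⟨?_, hane⟩
      rw [Metric.mem_ball, Real.dist_eq, abs_lt]
      have h1e : 1 - ε < a := lt_of_le_of_lt (le_max_right _ _) (lt_of_lt_of_le hma₀ haa)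
      constructor <;> linarith
    have hapos : 0 < a := lt_of_lt_of_le ha₀pos haa
    have hwne : w a ≠ 0 := by linarith [hwa]
    have hs := hstab a hapos hd hwne
    have hwneg : w a < 0 := by linarith
    have h1 : (1 / 3) * a * deriv w a / w a ≤ w a := by linarith
    rw [div_le_iff_of_neg hwneg] at h1
    -- h1 : w a * w a ≤ 1/3 * a * deriv w a
    nlinarith [h1, sq_nonneg (w a + 1/2), hapos, hal]
  -- mean value inequality on [a₀, b] for b ∈ (a₀, 1)
  have hMVT : ∀ b, a₀ < b → b < 1 → (3/4 : ℝ) * (b - a₀) ≤ w b - w a₀ := by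
    intro b hab hb1
    have hconv : Convex ℝ (Set.Icc a₀ b) := convex_Icc _ _
    have hcont : ContinuousOn w (Set.Icc a₀ b) := by
      intro x hx
      exact ((hkey x hx.1 (lt_of_le_of_lt hx.2 hb1)).1.continuousAt).continuousWithinAt
    have hderiv : ∀ x ∈ interior (Set.Icc a₀ b), (3/4 : ℝ) ≤ deriv w x := by
      intro x hx
      rw [interior_Icc] at hx
      exact (hkey x hx.1.le (lt_trans hx.2 hb1)).2
    exact hconv.mul_sub_le_image_sub_of_le_deriv hcont
      (fun x hx => ((hkey x (by rw [interior_Icc] at hx; exact hx.1.le)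
        (by rw [interior_Icc] at hx; exact lt_trans hx.2 hb1)).1).differentiableWithinAt)
      hderiv a₀ ⟨le_refl _, hab.le⟩ b ⟨hab.le, le_refl _⟩ hab.le
  -- take limit b → 1⁻
  have hle : nhdsWithin (1:ℝ) (Set.Iio 1) ≤ nhdsWithin 1 {(1:ℝ)}ᶜ :=
    nhdsWithin_mono _ (fun x hx => ne_of_lt hx)
  have htendL : Tendsto w (nhdsWithin (1:ℝ) (Set.Iio 1)) (nhds (-1)) := htend.mono_left hle
  have htendc : Tendsto (fun b => (3/4 : ℝ) * (b - a₀)) (nhdsWithin (1:ℝ) (Set.Iio 1))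
      (nhds ((3/4 : ℝ) * (1 - a₀))) := by
    apply Tendsto.mono_left _ nhdsWithin_le_nhds
    exact (tendsto_id.sub_const a₀).const_mul _
  have htendw : Tendsto (fun b => w b - w a₀) (nhdsWithin (1:ℝ) (Set.Iio 1))
      (nhds (-1 - w a₀)) := htendL.sub_const _
  have hevle : ∀ᶠ b in nhdsWithin (1:ℝ) (Set.Iio 1),
      (3/4 : ℝ) * (b - a₀) ≤ w b - w a₀ := by
    filter_upwards [Ioo_mem_nhdsLT_of_mem (⟨ha₀1, le_refl _⟩ : (1:ℝ) ∈ Set.Ioc a₀ 1)]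
      with b hb
    exact hMVT b hb.1 hb.2
  have hfinal : (3/4 : ℝ) * (1 - a₀) ≤ -1 - w a₀ :=
    le_of_tendsto_of_tendsto htendc htendw hevle
  have := (hbound a₀ ha₀pos).1
  nlinarith [hfinal, ha₀1]
end

section
/- There is no function w : (0, +∞) → ℝ that is differentiable at every point of (0, +∞) except on a finite set, satisfies the stability condition (i) at every point a at which w is differentiable and w(a) ≠ 0, satisfies w(a) → −1 as a → 1, and satisfies −1 ≤ w(a) ≤ 1 for all a > 0. -/
/-- There is no function `w : (0, +∞) → ℝ` that is differentiable at
every point of `(0, +∞)` except on a finite set, satisfies the stability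
condition at every `a > 0` where `w` is differentiable and `w a ≠ 0`, satisfies
`w a → -1` as `a → 1`, and satisfies `-1 ≤ w a ≤ 1` for all `a > 0`. -/
theorem stmt_8 :
    ¬ ∃ w : ℝ → ℝ,
      {t ∈ Set.Ioi (0 : ℝ) | ¬ DifferentiableAt ℝ w t}.Finite ∧
      (∀ a > (0 : ℝ), DifferentiableAt ℝ w a → w a ≠ 0 →
        w a - (1 / 3) * a * deriv w a / w a ≥ 0) ∧
      Filter.Tendsto w (nhdsWithin 1 {(1 : ℝ)}ᶜ) (nhds (-1)) ∧
      (∀ a > (0 : ℝ), -1 ≤ w a ∧ w a ≤ 1) := by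
  rintro ⟨w, hfin, hstab, hlim, hbound⟩
  set S := {t ∈ Set.Ioi (0 : ℝ) | ¬ DifferentiableAt ℝ w t} with hS
  -- restrict the limit to the left filter
  have hsub : Set.Iio (1:ℝ) ⊆ {(1:ℝ)}ᶜ := fun x hx => ne_of_lt hx
  have hliml : Filter.Tendsto w (nhdsWithin 1 (Set.Iio 1)) (nhds (-1)) :=
    hlim.mono_left (nhdsWithin_mono _ hsub)
  -- eventually w t < -1/2
  have h1 : ∀ᶠ t in nhdsWithin 1 (Set.Iio 1), w t < -1/2 := by
    have : Set.Iio (-1/2 : ℝ) ∈ nhds (-1 : ℝ) := Iio_mem_nhds (by norm_num)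
    exact hliml.eventually this
  -- eventually t ∉ S
  have h2 : ∀ᶠ t in nhdsWithin 1 (Set.Iio 1), t ∉ S := by
    have hcl : IsClosed (S \ {1} : Set ℝ) := (hfin.subset Set.diff_subset).isClosed
    have hmem : (S \ {1} : Set ℝ)ᶜ ∈ nhds (1:ℝ) := by
      refine hcl.isOpen_compl.mem_nhds ?_
      simp [Set.mem_diff]
    have hmem' : (S \ {1} : Set ℝ)ᶜ ∈ nhdsWithin (1:ℝ) (Set.Iio 1) := nhdsWithin_le_nhds hmem
    filter_upwards [hmem', self_mem_nhdsWithin] with t ht ht1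
    intro htS
    exact ht ⟨htS, ne_of_lt ht1⟩
  -- eventually 1/2 < t < 1
  have h3 : Set.Ioo (1/2 : ℝ) 1 ∈ nhdsWithin (1:ℝ) (Set.Iio 1) :=
    Ioo_mem_nhdsLT_of_mem (by norm_num : (1:ℝ) ∈ Set.Ioc (1/2 : ℝ) 1)
  have hP : ∀ᶠ t in nhdsWithin (1:ℝ) (Set.Iio 1),
      (1/2 < t ∧ t < 1) ∧ t ∉ S ∧ w t < -1/2 := by
    filter_upwards [h1, h2, h3] with t h1t h2t h3t
    exact ⟨⟨h3t.1, h3t.2⟩, h2t, h1t⟩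
  rw [Filter.eventually_iff, mem_nhdsLT_iff_exists_Ioo_subset] at hP
  obtain ⟨a₀, ha₀, hIoo⟩ := hP
  have ha₀1 : a₀ < 1 := ha₀
  -- derivative bound on Ioo a₀ 1
  have hd : ∀ t ∈ Set.Ioo a₀ 1, DifferentiableAt ℝ w t ∧ 3/4 ≤ deriv w t := by
    intro t ht
    obtain ⟨⟨ht2, ht1⟩, htS, htw⟩ := hIoo ht
    have htpos : (0:ℝ) < t := by linarith
    have hdiff : DifferentiableAt ℝ w t := by
      by_contra hnd
      exact htS ⟨htpos, hnd⟩
    refine ⟨hdiff, ?_⟩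
    have hwne : w t ≠ 0 := by linarith
    have hcond := hstab t htpos hdiff hwne
    have hwneg : w t < 0 := by linarith
    have hdiv : (1/3) * t * deriv w t / w t ≤ w t := by linarith
    have hkey : w t * w t ≤ (1/3) * t * deriv w t := (div_le_iff_of_neg hwneg).mp hdiv
    have htd : 3/4 ≤ t * deriv w t := by nlinarith [sq_nonneg (w t + 1/2)]
    have hdpos : 0 < deriv w t := by nlinarith
    nlinarith [mul_pos (show (0:ℝ) < 1 - t by linarith) hdpos]
  -- monotonicity of w x - 3/4 x on Ioo a₀ 1
  have hdiffOn : DifferentiableOn ℝ (fun x => w x - 3/4 * x) (Set.Ioo a₀ 1) := by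
    intro x hx
    exact ((hd x hx).1.sub ((differentiableAt_id.const_mul (3/4)))).differentiableWithinAt
  have hmono : MonotoneOn (fun x => w x - 3/4 * x) (Set.Ioo a₀ 1) := by
    apply monotoneOn_of_deriv_nonneg (convex_Ioo a₀ 1) hdiffOn.continuousOn
    · rw [interior_Ioo]; exact hdiffOn
    · intro x hx
      rw [interior_Ioo] at hx
      have hder : deriv (fun x => w x - 3/4 * x) x = deriv w x - 3/4 * 1 :=
        ((hd x hx).1.hasDerivAt.sub ((hasDerivAt_id x).const_mul (3/4))).deriv
      rw [hder]
      have := (hd x hx).2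
      linarith
  -- pick a point a
  set a := (a₀ + 1)/2 with ha
  have haI : a ∈ Set.Ioo a₀ 1 := ⟨by rw [ha]; linarith, by rw [ha]; linarith⟩
  obtain ⟨⟨ha2, ha1⟩, -, -⟩ := hIoo haI
  have hapos : (0:ℝ) < a := by linarith
  -- limit comparison
  have hev : ∀ᶠ t in nhdsWithin (1:ℝ) (Set.Iio 1), w a - 3/4 * a ≤ w t - 3/4 * t := by
    have hmem : Set.Ioo a 1 ∈ nhdsWithin (1:ℝ) (Set.Iio 1) :=
      Ioo_mem_nhdsLT_of_mem ⟨ha1, le_refl 1⟩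
    filter_upwards [hmem] with t ht
    exact hmono haI ⟨lt_trans haI.1 ht.1, ht.2⟩ ht.1.le
  have hlin : Filter.Tendsto (fun t : ℝ => 3/4 * t) (nhdsWithin (1:ℝ) (Set.Iio 1))
      (nhds (3/4 * 1)) :=
    ((continuous_const.mul continuous_id).tendsto 1).mono_left nhdsWithin_le_nhds
  have hlim2 : Filter.Tendsto (fun t => w t - 3/4 * t) (nhdsWithin (1:ℝ) (Set.Iio 1))
      (nhds (-1 - 3/4 * 1)) := hliml.sub hlin
  have hfin2 : w a - 3/4 * a ≤ -1 - 3/4 * 1 := ge_of_tendsto hlim2 hev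
  have := (hbound a hapos).1
  linarith
end

section
/- Let w : (0, +∞) → ℝ be differentiable on (0, δ) for some δ > 0 and suppose the stability condition (i) holds at every point a ∈ (0, δ) with w(a) ≠ 0. Suppose c < 0, ε > 0, t₀ ∈ (0, δ) with t₀ + ε < δ, and w(t) < c for all t ∈ (t₀ − ε, t₀ + ε). Then w(t) ≤ c for all t ∈ (0, t₀ + ε). -/
open Filter Topology

/-- If `w` is differentiable on `(0, δ)` and satisfies the stability
condition on `(0, δ)` wherever `w a ≠ 0`, and if `c < 0`, `ε > 0`,
`t₀ ∈ (0, δ)` with `t₀ + ε < δ` and `w t < c` on `(t₀ - ε, t₀ + ε)`, then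
`w t ≤ c` for all `t ∈ (0, t₀ + ε)`. -/
theorem stmt_9 (w : ℝ → ℝ) (δ : ℝ) (hδ : 0 < δ)
    (hdiff : ∀ t ∈ Set.Ioo (0 : ℝ) δ, DifferentiableAt ℝ w t)
    (hstab : ∀ a ∈ Set.Ioo (0 : ℝ) δ, w a ≠ 0 →
      w a - (1 / 3) * a * deriv w a / w a ≥ 0)
    (c : ℝ) (hc : c < 0) (ε : ℝ) (hε : 0 < ε)
    (t₀ : ℝ) (ht₀ : t₀ ∈ Set.Ioo (0 : ℝ) δ) (ht₀ε : t₀ + ε < δ)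
    (hlt : ∀ t ∈ Set.Ioo (t₀ - ε) (t₀ + ε), w t < c) :
    ∀ t ∈ Set.Ioo (0 : ℝ) (t₀ + ε), w t ≤ c := by
  rintro t ⟨ht0, htup⟩
  by_contra hwt
  push_neg at hwt
  -- t must be ≤ t₀ - ε, else hlt contradicts
  have htle : t ≤ t₀ - ε := by
    by_contra h
    push_neg at h
    exact absurd (hlt t ⟨h, htup⟩) (not_lt.2 hwt.le)
  have htlt₀ : t < t₀ := lt_of_le_of_lt htle (by linarith)
  -- the set where w ≥ c on [t, t₀]
  set S : Set ℝ := Set.Icc t t₀ ∩ w ⁻¹' Set.Ici c with hS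
  have hsub : Set.Icc t t₀ ⊆ Set.Ioo (0 : ℝ) δ := fun x hx =>
    ⟨lt_of_lt_of_le ht0 hx.1, lt_of_le_of_lt hx.2 (by linarith [ht₀.2])⟩
  have hcont : ContinuousOn w (Set.Icc t t₀) := fun x hx =>
    ((hdiff x (hsub hx)).continuousAt).continuousWithinAt
  have hSclosed : IsClosed S :=
    hcont.preimage_isClosed_of_isClosed isClosed_Icc isClosed_Ici
  have hScompact : IsCompact S :=
    isCompact_Icc.of_isClosed_subset hSclosed Set.inter_subset_left
  have hSne : S.Nonempty := ⟨t, ⟨le_refl t, htlt₀.le⟩, hwt.le⟩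
  set a := sSup S with ha
  have haS : a ∈ S := hScompact.sSup_mem hSne
  obtain ⟨⟨hta, hat₀⟩, hwa⟩ := haS
  have hwa : c ≤ w a := hwa
  have ha0 : 0 < a := lt_of_lt_of_le ht0 hta
  have haδ : a < δ := lt_of_le_of_lt hat₀ (by linarith [ht₀.2])
  have hwt₀ : w t₀ < c := hlt t₀ ⟨by linarith, by linarith⟩
  have hat₀' : a < t₀ := hat₀.lt_of_ne (fun h => by rw [h] at hwa; linarith)
  -- to the right of a (up to t₀), w < c
  have hright : ∀ x ∈ Set.Ioo a t₀, w x < c := by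
    intro x hx
    by_contra h
    push_neg at h
    have hxS : x ∈ S := ⟨⟨hta.trans hx.1.le, hx.2.le⟩, h⟩
    have := le_csSup hScompact.bddAbove hxS
    linarith [hx.1]
  -- by continuity from the right, w a ≤ c, hence w a = c
  have hmemIoo : Set.Ioo a t₀ ∈ 𝓝[>] a :=
    Ioo_mem_nhdsGT_of_mem ⟨le_refl a, hat₀'⟩
  have hct : Tendsto w (𝓝[>] a) (𝓝 (w a)) :=
    ((hdiff a ⟨ha0, haδ⟩).continuousAt.tendsto).mono_left nhdsWithin_le_nhds
  have hwac : w a = c := by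
    refine le_antisymm (le_of_tendsto hct ?_) hwa
    filter_upwards [hmemIoo] with x hx
    exact (hright x hx).le
  -- stability gives deriv w a > 0
  have hs := hstab a ⟨ha0, haδ⟩ (by rw [hwac]; exact hc.ne)
  rw [hwac] at hs
  have hd : 0 < deriv w a := by
    have h2 : (1 / 3) * a * deriv w a / c < 0 := by linarith
    rw [div_neg_iff] at h2
    rcases h2 with ⟨h3, _⟩ | ⟨_, h3⟩
    · nlinarith
    · linarith
  -- but the right difference quotient is ≤ 0, so deriv w a ≤ 0
  have hder := (hdiff a ⟨ha0, haδ⟩).hasDerivAt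
  rw [hasDerivAt_iff_tendsto_slope] at hder
  have hder' : Tendsto (slope w a) (𝓝[>] a) (𝓝 (deriv w a)) :=
    hder.mono_left (nhdsWithin_mono a fun x hx => ne_of_gt hx)
  have hle : deriv w a ≤ 0 := by
    refine le_of_tendsto hder' ?_
    filter_upwards [hmemIoo] with x hx
    have hwx := hright x hx
    rw [slope_def_field]
    apply div_nonpos_of_nonpos_of_nonneg
    · rw [hwac]; linarith
    · linarith [hx.1]
  linarith
end

section
/- Let 0 < T, let c < 0, and let w : (0, +∞) → ℝ be differentiable on (0, T] with w(t) ≤ c for all t ∈ (0, T] and w′(t) ≥ w(t)²/(3t) for all t ∈ (0, T]. Then for every s with 0 < s < T one has w(T) − w(s) ≥ (c²/3)·(ln T − ln s); consequently w(s) → −∞ as s → 0⁺. -/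
/-- If `0 < T`, `c < 0`, and `w` is differentiable on `(0, T]` with
`w t ≤ c` and `w' t ≥ w t ^ 2 / (3 t)` on `(0, T]`, then for all `0 < s < T` we
have `w T - w s ≥ (c² / 3) (ln T - ln s)`; consequently `w s → -∞` as `s → 0⁺`. -/
theorem stmt_10 (T c : ℝ) (hT : 0 < T) (hc : c < 0) (w : ℝ → ℝ)
    (hdiff : ∀ t ∈ Set.Ioc (0 : ℝ) T, DifferentiableAt ℝ w t)
    (hle : ∀ t ∈ Set.Ioc (0 : ℝ) T, w t ≤ c)
    (hderiv : ∀ t ∈ Set.Ioc (0 : ℝ) T, deriv w t ≥ (w t) ^ 2 / (3 * t)) :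
    (∀ s : ℝ, 0 < s → s < T →
      w T - w s ≥ c ^ 2 / 3 * (Real.log T - Real.log s)) ∧
    Filter.Tendsto w (nhdsWithin 0 (Set.Ioi 0)) Filter.atBot := by
  set f : ℝ → ℝ := fun t => w t - c ^ 2 / 3 * Real.log t with hf
  have hfd : ∀ t ∈ Set.Ioc (0 : ℝ) T, HasDerivAt f (deriv w t - c ^ 2 / 3 * t⁻¹) t := by
    intro t ht
    exact ((hdiff t ht).hasDerivAt).sub ((Real.hasDerivAt_log ht.1.ne').const_mul _)
  have hmono : MonotoneOn f (Set.Ioc (0 : ℝ) T) := by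
    have hconv : Convex ℝ (Set.Ioc (0 : ℝ) T) := convex_Ioc 0 T
    have hint : interior (Set.Ioc (0 : ℝ) T) = Set.Ioo 0 T := interior_Ioc
    refine monotoneOn_of_deriv_nonneg hconv ?_ ?_ ?_
    · intro t ht
      exact ((hfd t ht).continuousAt).continuousWithinAt
    · rw [hint]
      intro t ht
      exact ((hfd t ⟨ht.1, ht.2.le⟩).differentiableAt).differentiableWithinAt
    · rw [hint]
      intro t ht
      have htm : t ∈ Set.Ioc (0 : ℝ) T := ⟨ht.1, ht.2.le⟩
      rw [(hfd t htm).deriv]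
      have h1 : c ^ 2 ≤ w t ^ 2 := by
        have := hle t htm
        nlinarith
      have h2 : c ^ 2 / (3 * t) ≤ w t ^ 2 / (3 * t) := by
        have h0 : (0:ℝ) < 3 * t := mul_pos (by norm_num) ht.1
        exact div_le_div_of_nonneg_right h1 h0.le
      have h3 : c ^ 2 / 3 * t⁻¹ = c ^ 2 / (3 * t) := by
        field_simp
      have h4 := hderiv t htm
      linarith
  have key : ∀ s : ℝ, 0 < s → s < T →
      w T - w s ≥ c ^ 2 / 3 * (Real.log T - Real.log s) := by
    intro s hs hsT
    have := hmono (Set.mem_Ioc.2 ⟨hs, hsT.le⟩) (Set.mem_Ioc.2 ⟨hT, le_refl T⟩) hsT.le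
    simp only [hf] at this
    linarith
  refine ⟨key, ?_⟩
  have hbound : ∀ᶠ s in nhdsWithin 0 (Set.Ioi 0),
      w s ≤ (w T - c ^ 2 / 3 * Real.log T) + c ^ 2 / 3 * Real.log s := by
    filter_upwards [Ioo_mem_nhdsGT_of_mem (⟨le_refl 0, hT⟩ : (0:ℝ) ∈ Set.Ico 0 T)]
      with s hs
    have := key s hs.1 hs.2
    linarith
  have hlim : Filter.Tendsto (fun s => (w T - c ^ 2 / 3 * Real.log T) + c ^ 2 / 3 * Real.log s)
      (nhdsWithin 0 (Set.Ioi 0)) Filter.atBot := by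
    apply Filter.tendsto_atBot_add_const_left
    exact (Real.tendsto_log_nhdsGT_zero).const_mul_atBot (by nlinarith)
  exact Filter.tendsto_atBot_mono' _ hbound hlim
end

section
/- Let J ⊆ (0, +∞) be an interval, and let w : (0, +∞) → ℝ be differentiable at every point of J with w(a) < 0 for all a ∈ J, and suppose the stability condition (i) holds at every point of J. Then w is strictly increasing on J, i.e. for all s, t ∈ J with s < t one has w(s) < w(t). -/
/-- If `J ⊆ (0, +∞)` is an interval, `w` is differentiable at every
point of `J`, `w a < 0` on `J`, and the stability condition holds at every point
of `J`, then `w` is strictly increasing on `J`. -/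
theorem stmt_12 (J : Set ℝ) (hJ : J ⊆ Set.Ioi (0 : ℝ)) (hJint : J.OrdConnected)
    (w : ℝ → ℝ)
    (hdiff : ∀ a ∈ J, DifferentiableAt ℝ w a)
    (hneg : ∀ a ∈ J, w a < 0)
    (hstab : ∀ a ∈ J, w a - (1 / 3) * a * deriv w a / w a ≥ 0) :
    ∀ s ∈ J, ∀ t ∈ J, s < t → w s < w t := by
  have hpos : ∀ a ∈ J, 0 < deriv w a := by
    intro a ha
    have ha0 : 0 < a := hJ ha
    have hw := hneg a ha
    have hs := hstab a ha
    have h1 : (1 / 3) * a * deriv w a / w a ≤ w a := by linarith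
    have h2 : (1 / 3) * a * deriv w a / w a < 0 := lt_of_le_of_lt h1 hw
    have h3 : 0 < (1 / 3) * a * deriv w a := (div_neg_iff.mp h2).elim
      (fun ⟨hb, _⟩ => hb) (fun ⟨_, hb⟩ => absurd hw (not_lt.mpr hb.le))
    nlinarith
  have hmono : StrictMonoOn w J := by
    apply StrictMonoOn.mono (s := J)
    · exact strictMonoOn_of_deriv_pos hJint.convex
        (fun x hx => (hdiff x hx).continuousAt.continuousWithinAt)
        (fun x hx => hpos x (interior_subset hx))
    · exact le_refl J
  exact fun s hs t ht hst => hmono hs ht hst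
end
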